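/- (Monotone rearrangement of shifted antipodal potentials on a great circle.) Parametrize a great circle C of S^n through x_i and x_j by arclength θ ∈ ℝ/2πℤ with x_i at θ = 0, and let f(θ) = −d_C(0,θ)^p/p where d_C(0,θ) = min(|θ|, 2π − |θ|) (so f is the restriction of Φ_i minus b_i to C). Then Φ_j restricted to C equals θ ↦ f(θ − s) + b_j, where s = ±d(x_i,x_j) is the circle coordinate of x_j. Moreover for any s and any constant β, the set {θ : f(θ) − f(θ − s) > β} is either empty, all of the circle, or a single open arc. -/

import Mathlib

open Real

private lemma incr_aux {p : ℝ} (hp : 1 ≤ p) {δ : ℝ} (hδ : 0 ≤ δ) :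
    MonotoneOn (fun t : ℝ => (t + δ) ^ p - t ^ p) (Set.Ici (0 : ℝ)) := by
  have hder : ∀ t : ℝ, HasDerivAt (fun t : ℝ => (t + δ) ^ p - t ^ p)
      (p * (t + δ) ^ (p - 1) - p * t ^ (p - 1)) t := by
    intro t
    have h1 : HasDerivAt (fun t : ℝ => (t + δ) ^ p) (p * (t + δ) ^ (p - 1) * 1) t := by
      exact (Real.hasDerivAt_rpow_const (Or.inr hp)).comp t ((hasDerivAt_id t).add_const δ)
    have h2 : HasDerivAt (fun t : ℝ => t ^ p) (p * t ^ (p - 1)) t :=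
      Real.hasDerivAt_rpow_const (Or.inr hp)
    have h3 := h1.sub h2
    rw [mul_one] at h3
    exact h3
  apply monotoneOn_of_deriv_nonneg (convex_Ici 0)
  · exact (Continuous.continuousOn (by
      exact continuous_iff_continuousAt.2 fun t => (hder t).continuousAt))
  · intro t ht
    exact ((hder t).differentiableAt).differentiableWithinAt
  · intro t ht
    rw [interior_Ici] at ht
    rw [(hder t).deriv]
    have h0 : (0:ℝ) ≤ t := le_of_lt ht
    have : t ^ (p - 1) ≤ (t + δ) ^ (p - 1) :=
      Real.rpow_le_rpow h0 (by linarith) (by linarith)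
    have hp0 : 0 ≤ p := by linarith
    nlinarith

private lemma absdiff_mono {p : ℝ} (hp : 1 ≤ p) {A B : ℝ} (hAB : A ≤ B) :
    Monotone (fun θ : ℝ => |θ - A| ^ p - |θ - B| ^ p) := by
  have hp0 : (0:ℝ) ≤ p := by linarith
  -- case 1 : both ≤ A
  have case1 : ∀ x y : ℝ, x ≤ y → y ≤ A →
      |x - A| ^ p - |x - B| ^ p ≤ |y - A| ^ p - |y - B| ^ p := by
    intro x y hxy hyA
    rw [abs_of_nonpos (by linarith), abs_of_nonpos (by linarith),
      abs_of_nonpos (by linarith), abs_of_nonpos (by linarith)]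
    have key := incr_aux hp (sub_nonneg.2 hxy) (Set.mem_Ici.2 (by linarith : (0:ℝ) ≤ A - y))
      (Set.mem_Ici.2 (by linarith : (0:ℝ) ≤ B - y)) (by linarith)
    have e1 : A - y + (y - x) = -(x - A) := by ring
    have e2 : B - y + (y - x) = -(x - B) := by ring
    simp only [e1, e2] at key
    have e3 : -(y - A) = A - y := by ring
    have e4 : -(y - B) = B - y := by ring
    rw [e3, e4]
    linarith
  -- case 2 : both in [A, B]
  have case2 : ∀ x y : ℝ, A ≤ x → x ≤ y → y ≤ B →
      |x - A| ^ p - |x - B| ^ p ≤ |y - A| ^ p - |y - B| ^ p := by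
    intro x y hAx hxy hyB
    rw [abs_of_nonneg (show (0:ℝ) ≤ x - A by linarith),
      abs_of_nonneg (show (0:ℝ) ≤ y - A by linarith),
      abs_of_nonpos (show x - B ≤ (0:ℝ) by linarith),
      abs_of_nonpos (show y - B ≤ (0:ℝ) by linarith)]
    have h1 : (x - A) ^ p ≤ (y - A) ^ p := Real.rpow_le_rpow (by linarith) (by linarith) hp0
    have h2 : (-(y - B)) ^ p ≤ (-(x - B)) ^ p := Real.rpow_le_rpow (by linarith) (by linarith) hp0
    linarith
  -- case 3 : both ≥ B
  have case3 : ∀ x y : ℝ, B ≤ x → x ≤ y →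
      |x - A| ^ p - |x - B| ^ p ≤ |y - A| ^ p - |y - B| ^ p := by
    intro x y hBx hxy
    rw [abs_of_nonneg (by linarith), abs_of_nonneg (by linarith),
      abs_of_nonneg (by linarith), abs_of_nonneg (by linarith)]
    have key := incr_aux hp (sub_nonneg.2 hxy) (Set.mem_Ici.2 (by linarith : (0:ℝ) ≤ x - B))
      (Set.mem_Ici.2 (by linarith : (0:ℝ) ≤ x - A)) (by linarith)
    have e1 : x - B + (y - x) = y - B := by ring
    have e2 : x - A + (y - x) = y - A := by ring
    simp only [e1, e2] at key
    linarith
  intro x y hxy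
  simp only
  rcases le_total x A with hxA | hxA
  · rcases le_total y A with hyA | hyA
    · exact case1 x y hxy hyA
    · refine le_trans (case1 x A hxA le_rfl) ?_
      rcases le_total y B with hyB | hyB
      · exact case2 A y le_rfl hyA hyB
      · exact le_trans (case2 A B le_rfl hAB le_rfl) (case3 B y le_rfl hyB)
  · rcases le_total x B with hxB | hxB
    · rcases le_total y B with hyB | hyB
      · exact case2 x y hxA hxy hyB
      · exact le_trans (case2 x B hxA hxB le_rfl) (case3 B y le_rfl hyB)
    · exact case3 x y hxB hxy

/-- Monotone rearrangement of shifted antipodal potentials on a great circle.  Model the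
great circle as `AddCircle (2π)`, whose norm is the intrinsic circle distance to `0`,
namely `min(|θ|, 2π − |θ|)` on representatives; let `f θ = −(1/p)‖θ‖^p` (the restriction
of `Φ_i − b_i`).  Then for every shift `s` and constant `β`, the set
`{θ | f θ − f (θ − s) > β}` is empty, all of the circle, or a single connected arc. -/
theorem stmt17 (p : ℝ) (hp : 1 ≤ p) :
    (∀ θ : ℝ, θ ∈ Set.Icc (0 : ℝ) (2 * π) →
      ‖(θ : AddCircle (2 * π))‖ = min θ (2 * π - θ)) ∧
    (∀ (s : AddCircle (2 * π)) (β : ℝ),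
      {θ : AddCircle (2 * π) |
          β < (-(1 / p) * ‖θ‖ ^ p) - (-(1 / p) * ‖θ - s‖ ^ p)} = ∅ ∨
      {θ : AddCircle (2 * π) |
          β < (-(1 / p) * ‖θ‖ ^ p) - (-(1 / p) * ‖θ - s‖ ^ p)} = Set.univ ∨
      IsConnected {θ : AddCircle (2 * π) |
          β < (-(1 / p) * ‖θ‖ ^ p) - (-(1 / p) * ‖θ - s‖ ^ p)}) := by
  have hπ : (0:ℝ) < π := Real.pi_pos
  have hP : (0:ℝ) < 2 * π := by linarith
  -- norm equals |x| when |x| ≤ π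
  have Dabs : ∀ x : ℝ, |x| ≤ π → ‖(x : AddCircle (2 * π))‖ = |x| := by
    intro x hx
    refine (AddCircle.norm_coe_eq_abs_iff (2 * π) (ne_of_gt hP)).2 ?_
    rw [abs_of_pos hP]
    linarith
  -- shifting a representative by the period
  have hper : ∀ x : ℝ, ((x - 2 * π : ℝ) : AddCircle (2 * π)) = (x : AddCircle (2 * π)) := by
    intro x
    have := AddCircle.coe_add_period (2 * π) (x - 2 * π)
    rw [sub_add_cancel] at this
    exact this.symm
  -- mk of toIcoMod
  have hmk : ∀ a x : ℝ, ((toIcoMod hP a x : ℝ) : AddCircle (2 * π)) = (x : AddCircle (2 * π)) := by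
    intro a x
    rw [QuotientAddGroup.eq_iff_sub_mem, toIcoMod_sub_self]
    exact AddSubgroup.zsmul_mem _ (AddSubgroup.mem_zmultiples _) _
  have part1 : ∀ θ : ℝ, θ ∈ Set.Icc (0 : ℝ) (2 * π) →
      ‖(θ : AddCircle (2 * π))‖ = min θ (2 * π - θ) := by
    intro θ hθ
    obtain ⟨h0, h2⟩ := hθ
    rcases le_total θ π with hθπ | hθπ
    · rw [Dabs θ (by rw [abs_of_nonneg h0]; exact hθπ), abs_of_nonneg h0,
        min_eq_left (by linarith)]
    · rw [← hper θ, Dabs (θ - 2 * π) (by rw [abs_of_nonpos (by linarith)]; linarith),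
        abs_of_nonpos (by linarith), min_eq_right (by linarith)]
      ring
  refine ⟨part1, ?_⟩
  intro s β
  set T := {θ : AddCircle (2 * π) |
      β < (-(1 / p) * ‖θ‖ ^ p) - (-(1 / p) * ‖θ - s‖ ^ p)} with hT
  by_cases hTe : T = ∅
  · exact Or.inl hTe
  right; right
  -- representative of s in [0, 2π)
  obtain ⟨σ, hσ⟩ := QuotientAddGroup.mk_surjective s
  set s₀ : ℝ := toIcoMod hP 0 σ with hs₀def
  have hs₀mem : s₀ ∈ Set.Ico (0:ℝ) (0 + 2 * π) := toIcoMod_mem_Ico hP 0 σ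
  have hs₀ : ((s₀ : ℝ) : AddCircle (2 * π)) = s := by rw [hs₀def, hmk]; exact hσ
  have hs₀0 : 0 ≤ s₀ := hs₀mem.1
  have hs₀2 : s₀ < 2 * π := by have := hs₀mem.2; linarith
  -- the real-valued version of the defining function
  set val : ℝ → ℝ := fun θ =>
    (-(1 / p) * ‖(θ : AddCircle (2 * π))‖ ^ p) -
      (-(1 / p) * ‖(θ : AddCircle (2 * π)) - s‖ ^ p) with hval
  have hmem : ∀ θ : ℝ, ((θ : AddCircle (2 * π)) ∈ T ↔ β < val θ) := fun _ => Iff.rfl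
  -- rewrite val via absolute values on suitable ranges
  have hsub : ∀ θ : ℝ, (θ : AddCircle (2 * π)) - s = ((θ - s₀ : ℝ) : AddCircle (2 * π)) := by
    intro θ; rw [← hs₀, ← QuotientAddGroup.mk_sub]
  have hvala : ∀ θ : ℝ, θ ∈ Set.Icc π (π + 2 * π) →
      ‖(θ : AddCircle (2 * π))‖ = |θ - 2 * π| := by
    intro θ hθ
    rw [← hper θ]
    exact Dabs _ (abs_le.2 ⟨by linarith [hθ.1], by linarith [hθ.2]⟩)
  have hvalb : ∀ θ : ℝ, θ ∈ Set.Icc π (s₀ + π) →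
      ‖(θ : AddCircle (2 * π)) - s‖ = |θ - s₀| := by
    intro θ hθ
    rw [hsub]
    exact Dabs _ (abs_le.2 ⟨by linarith [hθ.1], by linarith [hθ.2]⟩)
  have hvalc : ∀ θ : ℝ, θ ∈ Set.Icc (s₀ + π) (π + 2 * π) →
      ‖(θ : AddCircle (2 * π)) - s‖ = |θ - (s₀ + 2 * π)| := by
    intro θ hθ
    rw [hsub, ← hper (θ - s₀)]
    have : θ - s₀ - 2 * π = θ - (s₀ + 2 * π) := by ring
    rw [this]
    exact Dabs _ (abs_le.2 ⟨by linarith [hθ.1], by linarith [hθ.2]⟩)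
  have hpinv : (0:ℝ) < 1 / p := by positivity
  -- monotone on [π, s₀ + π]
  have Hmono : ∀ a b : ℝ, π ≤ a → a ≤ b → b ≤ s₀ + π → val a ≤ val b := by
    intro a b ha hab hb
    have haI : a ∈ Set.Icc π (s₀ + π) := ⟨ha, by linarith⟩
    have hbI : b ∈ Set.Icc π (s₀ + π) := ⟨by linarith, hb⟩
    have haI' : a ∈ Set.Icc π (π + 2 * π) := ⟨ha, by linarith⟩
    have hbI' : b ∈ Set.Icc π (π + 2 * π) := ⟨by linarith, by linarith⟩
    have key := absdiff_mono hp (by linarith : s₀ ≤ 2 * π) hab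
    simp only at key
    rw [hval]
    simp only
    rw [hvala a haI', hvala b hbI', hvalb a haI, hvalb b hbI]
    nlinarith
  -- antitone on [s₀ + π, π + 2π]
  have Hanti : ∀ a b : ℝ, s₀ + π ≤ a → a ≤ b → b ≤ π + 2 * π → val b ≤ val a := by
    intro a b ha hab hb
    have haI : a ∈ Set.Icc (s₀ + π) (π + 2 * π) := ⟨ha, by linarith⟩
    have hbI : b ∈ Set.Icc (s₀ + π) (π + 2 * π) := ⟨by linarith, hb⟩
    have haI' : a ∈ Set.Icc π (π + 2 * π) := ⟨by linarith, by linarith⟩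
    have hbI' : b ∈ Set.Icc π (π + 2 * π) := ⟨by linarith, hb⟩
    have key := absdiff_mono hp (by linarith : 2 * π ≤ s₀ + 2 * π) hab
    simp only at key
    rw [hval]
    simp only
    rw [hvala a haI', hvala b hbI', hvalc a haI, hvalc b hbI]
    nlinarith
  -- the lifted set
  set S : Set ℝ := {θ : ℝ | θ ∈ Set.Icc π (π + 2 * π) ∧ (θ : AddCircle (2 * π)) ∈ T} with hS
  have himg : T = (fun θ : ℝ => (θ : AddCircle (2 * π))) '' S := by
    apply Set.Subset.antisymm
    · intro x hx
      obtain ⟨θ, rfl⟩ := QuotientAddGroup.mk_surjective x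
      refine ⟨toIcoMod hP π θ, ⟨?_, ?_⟩, hmk π θ⟩
      · have h := toIcoMod_mem_Ico hP π θ
        exact ⟨h.1, le_of_lt h.2⟩
      · rw [hmk π θ]; exact hx
    · rintro x ⟨θ, hθ, rfl⟩
      exact hθ.2
  have hSne : S.Nonempty := by
    obtain ⟨x, hx⟩ := Set.nonempty_iff_ne_empty.2 hTe
    rw [himg] at hx
    obtain ⟨θ, hθ, rfl⟩ := hx
    exact ⟨θ, hθ⟩
  have hSord : Set.OrdConnected S := by
    constructor
    rintro x ⟨hxI, hxT⟩ z ⟨hzI, hzT⟩ y hy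
    obtain ⟨hxy, hyz⟩ := hy
    have hyI : y ∈ Set.Icc π (π + 2 * π) := ⟨le_trans hxI.1 hxy, le_trans hyz hzI.2⟩
    refine ⟨hyI, ?_⟩
    rw [hmem] at hxT hzT ⊢
    rcases le_total y (s₀ + π) with hcase | hcase
    · exact lt_of_lt_of_le hxT (Hmono x y hxI.1 hxy hcase)
    · exact lt_of_lt_of_le hzT (Hanti y z hcase hyz hzI.2)
  rw [himg]
  exact (IsConnected.image ⟨hSne, hSord.isPreconnected⟩ _
    (AddCircle.continuous_mk' (2 * π)).continuousOn)
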